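/- Let G be an AH-algebra and let g,h ∈ G with gCh and 0 ≤ g ≤ h. Then: (i) g² ≤ h², and (ii) g^(1/2) ≤ h^(1/2). -/

import Mathlib

/-- An e-ring `(R,E)`: an associative ring `R` with unity together with a set `E ⊆ R`
of effects, satisfying the Foulis axioms.  `E⁺` is realized as the additive submonoid
closure of `E` (the set of all finite sums of effects). -/
structure ERing (R : Type*) [Ring R] where
  E : Set R
  zero_mem : (0 : R) ∈ E
  one_mem : (1 : R) ∈ E
  compl_mem : ∀ e ∈ E, 1 - e ∈ E
  epos_i : ∀ a ∈ AddSubmonoid.closure E, -a ∈ AddSubmonoid.closure E → a = 0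
  epos_ii : ∀ a ∈ AddSubmonoid.closure E, 1 - a ∈ AddSubmonoid.closure E → a ∈ E
  epos_iii : ∀ a ∈ AddSubmonoid.closure E, ∀ b ∈ AddSubmonoid.closure E,
    a * b = b * a → a * b ∈ AddSubmonoid.closure E
  epos_iv : ∀ a ∈ AddSubmonoid.closure E, ∀ b ∈ AddSubmonoid.closure E,
    a * b * a ∈ AddSubmonoid.closure E
  epos_v : ∀ a ∈ AddSubmonoid.closure E, ∀ b ∈ AddSubmonoid.closure E,
    a * b * a = 0 → a * b = 0 ∧ b * a = 0
  epos_vi : ∀ a ∈ AddSubmonoid.closure E, ∀ b ∈ AddSubmonoid.closure E,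
    (a - b) ^ 2 ∈ AddSubmonoid.closure E
  zero_ne_one : (0 : R) ≠ 1

namespace ERing

variable {R : Type*} [Ring R] (er : ERing R)

/-- `E⁺`, the set of all finite sums of effects; the positive cone of the directed group. -/
def Epos : Set R := (AddSubmonoid.closure er.E : Set R)

/-- The directed group `G = E⁺ - E⁺` of the e-ring. -/
def G : Set R := {g | ∃ a ∈ er.Epos, ∃ b ∈ er.Epos, g = a - b}

/-- The partial order on the directed group: `g ≤ h` iff `h - g ∈ E⁺`. -/
def le (g h : R) : Prop := h - g ∈ er.Epos

/-- The set of projections `P = {p ∈ G : p = p²}`. -/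
def P : Set R := {p | p ∈ er.G ∧ p = p ^ 2}

/-- The commutant in `G` of a subset `A ⊆ G`. -/
def commutant (A : Set R) : Set R := {g | g ∈ er.G ∧ ∀ a ∈ A, g * a = a * g}

/-- The bicommutant in `G` of a subset `A ⊆ G`. -/
def CC (A : Set R) : Set R := er.commutant (er.commutant A)

/-- `s` is the supremum of `A` within the subset `S` (w.r.t. the e-ring order). -/
def IsSupIn (S A : Set R) (s : R) : Prop :=
  s ∈ S ∧ (∀ a ∈ A, er.le a s) ∧ ∀ b ∈ S, (∀ a ∈ A, er.le a b) → er.le s b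

/-- `s` is the infimum of `A` within the subset `S` (w.r.t. the e-ring order). -/
def IsInfIn (S A : Set R) (s : R) : Prop :=
  s ∈ S ∧ (∀ a ∈ A, er.le s a) ∧ ∀ b ∈ S, (∀ a ∈ A, er.le b a) → er.le b s

/-- Quadratic annihilation property. -/
def HasQA : Prop := ∀ g ∈ er.G, ∀ h ∈ er.G, g * h ^ 2 * g = 0 → g * h = 0 ∧ h * g = 0

/-- Commutative Vigier property: every ascending sequence of pairwise commuting elements
of `G` bounded above in `G` has a supremum in `G` which double commutes with the sequence. -/
def HasCV : Prop :=
  ∀ g : ℕ → R, (∀ n, g n ∈ er.G) → (∀ n, er.le (g n) (g (n + 1))) →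
    (∀ m n, g m * g n = g n * g m) → (∃ b ∈ er.G, ∀ n, er.le (g n) b) →
    ∃ s, er.IsSupIn er.G (Set.range g) s ∧ s ∈ er.CC (Set.range g)

/-- `G` is an abstract Hermitian (AH) algebra: there is a semitransparent effect `½`,
`G` has quadratic annihilation, and `G` has the commutative Vigier property. -/
def IsAH : Prop := (∃ h ∈ er.E, h + h = 1) ∧ er.HasQA ∧ er.HasCV

end ERing


namespace ERing

variable {R : Type*} [Ring R] (er : ERing R)

lemma eposE {e : R} (he : e ∈ er.E) : e ∈ er.Epos := AddSubmonoid.subset_closure he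

lemma epos0 : (0:R) ∈ er.Epos := er.eposE er.zero_mem

lemma epos1 : (1:R) ∈ er.Epos := er.eposE er.one_mem

lemma eposAdd {a b : R} (ha : a ∈ er.Epos) (hb : b ∈ er.Epos) : a + b ∈ er.Epos :=
  AddSubmonoid.add_mem _ ha hb

lemma eposG {a : R} (ha : a ∈ er.Epos) : a ∈ er.G :=
  ⟨a, ha, 0, er.epos0, by abel⟩

lemma G0 : (0:R) ∈ er.G := er.eposG er.epos0
lemma G1 : (1:R) ∈ er.G := er.eposG er.epos1

lemma Gadd {a b : R} (ha : a ∈ er.G) (hb : b ∈ er.G) : a + b ∈ er.G := by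
  obtain ⟨p, hp, q, hq, rfl⟩ := ha
  obtain ⟨p', hp', q', hq', rfl⟩ := hb
  exact ⟨p + p', er.eposAdd hp hp', q + q', er.eposAdd hq hq', by abel⟩

lemma Gneg {a : R} (ha : a ∈ er.G) : -a ∈ er.G := by
  obtain ⟨p, hp, q, hq, rfl⟩ := ha
  exact ⟨q, hq, p, hp, by abel⟩

lemma Gsub {a b : R} (ha : a ∈ er.G) (hb : b ∈ er.G) : a - b ∈ er.G := by
  have := er.Gadd ha (er.Gneg hb); simpa [sub_eq_add_neg] using this

lemma sqEpos {x : R} (hx : x ∈ er.G) : x * x ∈ er.Epos := by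
  obtain ⟨p, hp, q, hq, rfl⟩ := hx
  have := er.epos_vi p hp q hq
  simpa [pow_two, Epos] using this

lemma mulEpos {a b : R} (ha : a ∈ er.Epos) (hb : b ∈ er.Epos) (h : a * b = b * a) :
    a * b ∈ er.Epos := er.epos_iii a ha b hb h

lemma eposZero {a : R} (ha : a ∈ er.Epos) (hb : -a ∈ er.Epos) : a = 0 := er.epos_i a ha hb

lemma natMulEpos (n : ℕ) {a : R} (ha : a ∈ er.Epos) : (n:R) * a ∈ er.Epos := by
  induction n with
  | zero => simpa using er.epos0
  | succ k ih =>
      have : ((k:R) + 1) * a = (k:R) * a + a := by noncomm_ring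
      rw [Nat.cast_succ, this]
      exact er.eposAdd ih ha

lemma eposBound {a : R} (ha : a ∈ er.Epos) : ∃ N : ℕ, (N:R) - a ∈ er.Epos := by
  induction ha using AddSubmonoid.closure_induction with
  | mem e he =>
      exact ⟨1, by simpa using er.eposE (er.compl_mem e he)⟩
  | zero => exact ⟨0, by simpa using er.epos0⟩
  | add x y hx hy ihx ihy =>
      obtain ⟨N, hN⟩ := ihx
      obtain ⟨M, hM⟩ := ihy
      refine ⟨N + M, ?_⟩
      have : ((N + M : ℕ):R) - (x + y) = ((N:R) - x) + ((M:R) - y) := by push_cast; abel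
      rw [this]
      exact er.eposAdd hN hM


section Half

variable {c : R}

lemma half_central (hc : c + c = 1) (z : R) : c * z = z * c := by
  have h1 : z * c = c * (z * c) + c * (z * c) := by
    have : (c + c) * (z * c) = c * (z * c) + c * (z * c) := by noncomm_ring
    rw [hc, one_mul] at this; exact this
  have h2 : c * z = (c * z) * c + (c * z) * c := by
    have : (c * z) * (c + c) = (c * z) * c + (c * z) * c := by noncomm_ring
    rw [hc, mul_one] at this; exact this
  rw [h1, h2]; noncomm_ring

lemma cEpos (hcE : c ∈ er.E) : c ∈ er.Epos := er.eposE hcE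

lemma halfEpos (hcE : c ∈ er.E) (hc : c + c = 1) {a : R} (ha : a ∈ er.Epos) : c * a ∈ er.Epos :=
  er.mulEpos (er.cEpos hcE) ha (half_central hc a)

lemma halfG (hcE : c ∈ er.E) (hc : c + c = 1) {a : R} (ha : a ∈ er.G) : c * a ∈ er.G := by
  obtain ⟨p, hp, q, hq, rfl⟩ := ha
  exact ⟨c * p, er.halfEpos hcE hc hp, c * q, er.halfEpos hcE hc hq, by noncomm_ring⟩

lemma half_double (hc : c + c = 1) (z : R) : c * z + c * z = z := by
  have : (c + c) * z = c * z + c * z := by noncomm_ring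
  rw [hc] at this; simpa using this.symm

end Half


/-- The square-root iteration sequence `t₀ = 0`, `t_{n+1} = c(a + tₙ²)`. -/
def tseq (c a : R) : ℕ → R
  | 0 => 0
  | n + 1 => c * (a + tseq c a n * tseq c a n)

lemma sq_diff {x y : R} (hxy : x * y = y * x) : (x - y) * (x + y) = x * x - y * y := by
  have : (x - y) * (x + y) = x * x + (x * y - y * x) - y * y := by noncomm_ring
  rw [hxy] at this; simpa using this

lemma sq_diff' {x y : R} (hxy : x * y = y * x) : (x + y) * (x - y) = x * x - y * y := by
  have : (x + y) * (x - y) = x * x - (x * y - y * x) - y * y := by noncomm_ring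
  rw [hxy] at this; simpa using this

section Tseq

variable {c a : R}

lemma tseq_comm (hc : c + c = 1) {z : R} (hz : Commute z a) :
    ∀ n, Commute z (tseq c a n)
  | 0 => by simp [tseq]
  | (n + 1) => by
      have ih := tseq_comm hc hz n
      have hzc : Commute z c := (show Commute c z from half_central hc z).symm
      exact (hzc).mul_right (hz.add_right (ih.mul_right ih))

lemma tseq_comm_a (hc : c + c = 1) (n : ℕ) : Commute a (tseq c a n) :=
  tseq_comm hc (Commute.refl a) n

lemma tseq_pair (hc : c + c = 1) (m n : ℕ) :
    Commute (tseq c a m) (tseq c a n) :=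
  tseq_comm hc (tseq_comm_a hc m).symm n

lemma tseq_Epos (hcE : c ∈ er.E) (hc : c + c = 1) (ha0 : a ∈ er.Epos) :
    ∀ n, tseq c a n ∈ er.Epos := by
  intro n
  induction n with
  | zero => simpa [tseq] using er.epos0
  | succ n ih =>
      exact er.halfEpos hcE hc (er.eposAdd ha0 (er.sqEpos (er.eposG ih)))

lemma tseq_le_one (hcE : c ∈ er.E) (hc : c + c = 1) (ha0 : a ∈ er.Epos)
    (ha1 : (1:R) - a ∈ er.Epos) : ∀ n, (1:R) - tseq c a n ∈ er.Epos := by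
  intro n
  induction n with
  | zero => simpa [tseq] using er.epos1
  | succ n ih =>
      set t := tseq c a n
      have hmm : ((1:R) - t) * (1 + t) = (1 + t) * (1 - t) := by noncomm_ring
      have hm : ((1:R) - t) * (1 + t) ∈ er.Epos :=
        er.mulEpos ih (er.eposAdd er.epos1 (er.tseq_Epos hcE hc ha0 n)) hmm
      have hW : ((1:R) - a) + (1 - t) * (1 + t) ∈ er.Epos := er.eposAdd ha1 hm
      have hcW := er.halfEpos hcE hc hW
      have hone : c * (1 + 1) = (1:R) := by
        have : c * ((1:R) + 1) = c + c := by noncomm_ring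
        rw [this, hc]
      have hid : c * (((1:R) - a) + (1 - t) * (1 + t)) = c * (1 + 1) - c * (a + t * t) := by
        noncomm_ring
      rw [hid, hone] at hcW
      exact hcW

lemma tseq_ascending (hcE : c ∈ er.E) (hc : c + c = 1) (ha0 : a ∈ er.Epos) :
    ∀ n, tseq c a (n + 1) - tseq c a n ∈ er.Epos := by
  intro n
  induction n with
  | zero =>
      have h1 : tseq c a 1 - tseq c a 0 = c * a := by simp [tseq]
      rw [h1]; exact er.halfEpos hcE hc ha0
  | succ n ih =>
      set t0 := tseq c a n with ht0
      set t1 := tseq c a (n + 1) with ht1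
      have hcm : t1 * t0 = t0 * t1 := tseq_pair hc (n+1) n
      have hsum : t1 + t0 ∈ er.Epos :=
        er.eposAdd (er.tseq_Epos hcE hc ha0 (n+1)) (er.tseq_Epos hcE hc ha0 n)
      have hprod : (t1 - t0) * (t1 + t0) ∈ er.Epos := by
        refine er.mulEpos ih hsum ?_
        rw [sq_diff hcm, sq_diff' hcm]
      have hid : tseq c a (n + 2) - tseq c a (n + 1) = c * ((t1 - t0) * (t1 + t0)) := by
        show c * (a + t1 * t1) - c * (a + t0 * t0) = _
        rw [sq_diff hcm]; noncomm_ring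
      rw [hid]
      exact er.halfEpos hcE hc hprod

end Tseq


section Tlim

variable {c a : R}

lemma tlim (hCV : er.HasCV) (hcE : c ∈ er.E) (hc : c + c = 1)
    (haG : a ∈ er.G) (ha0 : a ∈ er.Epos) (ha1 : (1:R) - a ∈ er.Epos) :
    ∃ t : R, er.IsSupIn er.G (Set.range (tseq c a)) t ∧
      (∀ z ∈ er.G, Commute z a → Commute z t) ∧
      t ∈ er.Epos ∧ (1:R) - t ∈ er.Epos ∧ t + t = a + t * t := by
  have htnE : ∀ n, tseq c a n ∈ er.Epos := er.tseq_Epos hcE hc ha0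
  obtain ⟨t, hsup, hccm⟩ := hCV (tseq c a)
    (fun n => er.eposG (htnE n))
    (fun n => er.tseq_ascending hcE hc ha0 n)
    (fun m n => tseq_pair hc m n)
    ⟨1, er.G1, fun n => er.tseq_le_one hcE hc ha0 ha1 n⟩
  have htG : t ∈ er.G := hsup.1
  have hcomm : ∀ z ∈ er.G, Commute z a → Commute z t := by
    intro z hzG hza
    have hz : z ∈ er.commutant (Set.range (tseq c a)) := by
      refine ⟨hzG, ?_⟩
      rintro x ⟨n, rfl⟩
      exact tseq_comm hc hza n
    exact (hccm.2 z hz).symm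
  have ht_tn : ∀ n, Commute t (tseq c a n) := by
    intro n
    exact (hcomm (tseq c a n) (er.eposG (htnE n)) (tseq_comm_a hc n).symm).symm
  have htub : ∀ n, t - tseq c a n ∈ er.Epos := fun n => hsup.2.1 _ ⟨n, rfl⟩
  have htE : t ∈ er.Epos := by
    have := htub 0
    simpa [tseq] using this
  have ht1 : (1:R) - t ∈ er.Epos := by
    refine hsup.2.2 1 er.G1 ?_
    rintro x ⟨n, rfl⟩
    exact er.tseq_le_one hcE hc ha0 ha1 n
  set u := c * (a + t * t) with hu
  have huG : u ∈ er.G := er.halfG hcE hc (er.Gadd haG (er.eposG (er.sqEpos htG)))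
  have hu2 : u + u = a + t * t := half_double hc _
  have hu_ub : ∀ n, u - tseq c a n ∈ er.Epos := by
    intro n
    match n with
    | 0 => simpa [tseq] using er.halfEpos hcE hc (er.eposAdd ha0 (er.sqEpos htG))
    | (n + 1) =>
        have hcm : t * tseq c a n = tseq c a n * t := ht_tn n
        have hid : u - tseq c a (n + 1) = c * ((t - tseq c a n) * (t + tseq c a n)) := by
          show c * (a + t * t) - c * (a + tseq c a n * tseq c a n) = _
          rw [sq_diff hcm]; noncomm_ring
        rw [hid]
        refine er.halfEpos hcE hc (er.mulEpos (htub n) (er.eposAdd htE (htnE n)) ?_)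
        rw [sq_diff hcm, sq_diff' hcm]
  have hle_tu : u - t ∈ er.Epos := hsup.2.2 u huG (by rintro x ⟨n, rfl⟩; exact hu_ub n)
  set v := a + t * t - (t + t) with hv_def
  have hv : v ∈ er.Epos := by
    have hv2 : v = (u - t) + (u - t) := by rw [hv_def, ← hu2]; abel
    rw [hv2]; exact er.eposAdd hle_tu hle_tu
  -- key identity producing `-v`
  have h2t : ∀ n, tseq c a (n+1) + tseq c a (n+1) = a + tseq c a n * tseq c a n :=
    fun n => half_double hc _
  have key : ∀ x y : R, x + x = a + y * y →
      ((x - y) + (x - y)) - v = ((1:R) - y) * (1 - y) - (1 - t) * (1 - t) := by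
    intro x y hxy
    have ha' : a = x + x - y * y := eq_sub_of_add_eq hxy.symm
    rw [hv_def, ha']
    noncomm_ring
  have hidn : ∀ n, ((tseq c a (n+1) - tseq c a n) + (tseq c a (n+1) - tseq c a n)) - v
      = ((1:R) - tseq c a n) * (1 - tseq c a n) - (1 - t) * (1 - t) :=
    fun n => key _ _ (h2t n)
  have hDn : ∀ n, ((1:R) - tseq c a n) * (1 - tseq c a n) - (1 - t) * (1 - t) ∈ er.Epos := by
    intro n
    have hcm : ((1:R) - tseq c a n) * (1 - t) = (1 - t) * (1 - tseq c a n) := by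
      have := (ht_tn n).symm
      simp only [Commute, SemiconjBy] at this
      noncomm_ring
      rw [this]
    have hid2 : ((1:R) - tseq c a n) * (1 - tseq c a n) - (1 - t) * (1 - t)
        = ((1 - tseq c a n) - (1 - t)) * ((1 - tseq c a n) + (1 - t)) := by
      rw [sq_diff hcm]
    rw [hid2]
    have h1 : ((1:R) - tseq c a n) - (1 - t) = t - tseq c a n := by abel
    refine er.mulEpos (by rw [h1]; exact htub n)
      (er.eposAdd (er.tseq_le_one hcE hc ha0 ha1 n) ht1) ?_
    rw [sq_diff hcm, sq_diff' hcm]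
  have hstep : ∀ n, ((tseq c a (n+1) - tseq c a n) + (tseq c a (n+1) - tseq c a n)) - v
      ∈ er.Epos := fun n => by rw [hidn n]; exact hDn n
  have hSn : ∀ n : ℕ, (tseq c a n + tseq c a n) - (n:R) * v ∈ er.Epos := by
    intro n
    induction n with
    | zero => simpa [tseq] using er.epos0
    | succ n ih =>
        have hd : (tseq c a (n+1) + tseq c a (n+1)) - ((n:R)+1) * v
            = ((tseq c a n + tseq c a n) - (n:R) * v)
              + (((tseq c a (n+1) - tseq c a n) + (tseq c a (n+1) - tseq c a n)) - v) := by
          noncomm_ring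
        rw [Nat.cast_succ, hd]
        exact er.eposAdd ih (hstep n)
  have hbound : ∀ n : ℕ, ((1:R) + 1) - (n:R) * v ∈ er.Epos := by
    intro n
    have : ((1:R) + 1) - (n:R) * v
        = ((tseq c a n + tseq c a n) - (n:R) * v)
          + (((1:R) - tseq c a n) + ((1:R) - tseq c a n)) := by abel
    rw [this]
    exact er.eposAdd (hSn n) (er.eposAdd (er.tseq_le_one hcE hc ha0 ha1 n)
      (er.tseq_le_one hcE hc ha0 ha1 n))
  -- archimedean argument
  have hvneg : -v ∈ er.Epos := by
    obtain ⟨σ, hσsup, -⟩ := hCV (fun n : ℕ => (n:R) * v)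
      (fun n => er.eposG (er.natMulEpos n hv))
      (fun n => by
        show ((n+1:ℕ):R) * v - (n:R) * v ∈ er.Epos
        have : ((n+1:ℕ):R) * v - (n:R) * v = v := by push_cast; noncomm_ring
        rw [this]; exact hv)
      (fun m n => by
        have cm : Commute ((m:R) * v) ((n:R) * v) :=
          ((Nat.cast_commute m ((n:R) * v))).mul_left
            (((Nat.cast_commute n v).symm).mul_right (Commute.refl v))
        exact cm)
      ⟨1 + 1, er.Gadd er.G1 er.G1, fun n => hbound n⟩
    have hub2 : ∀ x ∈ Set.range (fun n : ℕ => (n:R) * v), er.le x (σ - v) := by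
      rintro x ⟨n, rfl⟩
      show (σ - v) - (n:R) * v ∈ er.Epos
      have : (σ - v) - (n:R) * v = σ - ((n+1:ℕ):R) * v := by push_cast; noncomm_ring
      rw [this]
      exact hσsup.2.1 _ ⟨n+1, rfl⟩
    have := hσsup.2.2 (σ - v) (er.Gsub hσsup.1 (er.eposG hv)) hub2
    have h' : (σ - v) - σ = -v := by abel
    rw [← h']
    exact this
  have hv0 : v = 0 := er.eposZero hv hvneg
  have heq : t + t = a + t * t := by
    have := sub_eq_zero.mp (by rw [← hv_def]; exact hv0)
    exact this.symm
  exact ⟨t, hsup, hcomm, htE, ht1, heq⟩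

end Tlim


section Sqrt

variable {c : R}

lemma tseq_mono (hcE : c ∈ er.E) (hc : c + c = 1) {a a' : R}
    (ha0 : a ∈ er.Epos) (ha0' : a' ∈ er.Epos) (hco : Commute a a')
    (hle : a' - a ∈ er.Epos) : ∀ n, tseq c a' n - tseq c a n ∈ er.Epos := by
  intro n
  induction n with
  | zero => simpa [tseq] using er.epos0
  | succ n ih =>
      have hm : Commute (tseq c a' n) (tseq c a n) :=
        tseq_comm hc (tseq_comm (a := a') hc hco n).symm n
      have hsum : tseq c a' n + tseq c a n ∈ er.Epos :=
        er.eposAdd (er.tseq_Epos hcE hc ha0' n) (er.tseq_Epos hcE hc ha0 n)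
      have hp : (tseq c a' n - tseq c a n) * (tseq c a' n + tseq c a n) ∈ er.Epos := by
        refine er.mulEpos ih hsum ?_
        rw [sq_diff hm.eq, sq_diff' hm.eq]
      have hX : (a' - a) + (tseq c a' n - tseq c a n) * (tseq c a' n + tseq c a n)
          ∈ er.Epos := er.eposAdd hle hp
      have hid : tseq c a' (n+1) - tseq c a (n+1)
          = c * ((a' - a) + (tseq c a' n - tseq c a n) * (tseq c a' n + tseq c a n)) := by
        show c * (a' + tseq c a' n * tseq c a' n) - c * (a + tseq c a n * tseq c a n) = _
        rw [sq_diff hm.eq]; noncomm_ring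
      rw [hid]
      exact er.halfEpos hcE hc hX

lemma cpowEpos (hcE : c ∈ er.E) (hc : c + c = 1) (k : ℕ) : c ^ k ∈ er.Epos := by
  induction k with
  | zero => simpa using er.epos1
  | succ k ih =>
      rw [pow_succ]
      exact er.mulEpos ih (er.cEpos hcE) ((half_central hc (c^k)).symm)

lemma exists_sqrt_pair (hQA : er.HasQA) (hCV : er.HasCV) (hcE : c ∈ er.E) (hc : c + c = 1)
    {g h : R} (hgE : g ∈ er.Epos) (hhE : h ∈ er.Epos) (hC : g * h = h * g)
    (hgh : h - g ∈ er.Epos) :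
    ∃ r' s' : R, r' ∈ er.Epos ∧ r' * r' = g ∧ (∀ z ∈ er.G, Commute z g → Commute z r') ∧
      s' ∈ er.Epos ∧ s' * s' = h ∧ (∀ z ∈ er.G, Commute z h → Commute z s') ∧
      s' - r' ∈ er.Epos := by
  have hcent : ∀ z : R, Commute c z := fun z => half_central hc z
  obtain ⟨N, hN⟩ := er.eposBound hhE
  set k := N with hk
  set m := 2 * k with hm
  have hNm : N ≤ 2 ^ m := by
    calc N ≤ 2 ^ N := Nat.le_of_lt (Nat.lt_two_pow_self (n := N))
    _ ≤ 2 ^ m := Nat.pow_le_pow_right (by norm_num) (by omega)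
  have hccp : ∀ z : R, Commute (c ^ m) z := fun z => (hcent z).pow_left m
  have htwo : ∀ z : R, Commute (2:R) z := fun z => by
    have : Commute ((1:R) + 1) z := (Commute.one_left z).add_left (Commute.one_left z)
    rwa [one_add_one_eq_two] at this
  have htp : ∀ z : R, Commute ((2:R) ^ k) z := fun z => (htwo z).pow_left k
  have h2call : ∀ j : ℕ, (2:R) ^ j * c ^ j = 1 := by
    intro j
    induction j with
    | zero => simp
    | succ j ih =>
        have e1 : (2:R) ^ (j+1) * c ^ (j+1) = ((2:R) ^ j * c ^ j) * ((2:R) * c) := by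
          rw [pow_succ, pow_succ]
          exact (htwo (c ^ j)).mul_mul_mul_comm _ _
        rw [e1, ih, one_mul, two_mul, hc]
  have h2c : (2:R) ^ m * c ^ m = 1 := h2call m
  have hcast : ∀ j : ℕ, ((j:ℕ):R) ∈ er.Epos := fun j => by
    simpa using er.natMulEpos j er.epos1
  -- the rescaled elements
  have hsub : ∀ {x : R}, x ∈ er.Epos → h - x ∈ er.Epos → (1:R) - c ^ m * x ∈ er.Epos := by
    intro x hxE hhx
    have h1 : ((2:R) ^ m) - x = (((2 ^ m - N : ℕ)):R) + (((N:ℕ):R) - h) + (h - x) := by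
      have : (((2 ^ m - N : ℕ)):R) = (2:R) ^ m - ((N:ℕ):R) := by
        push_cast [Nat.cast_sub hNm]; ring
      rw [this]; abel
    have h2 : ((2:R) ^ m) - x ∈ er.Epos := by
      rw [h1]; exact er.eposAdd (er.eposAdd (hcast _) hN) hhx
    have h3 : c ^ m * ((2:R) ^ m - x) ∈ er.Epos :=
      er.mulEpos (er.cpowEpos hcE hc m) h2 (hccp _).eq
    have h4 : c ^ m * ((2:R) ^ m - x) = 1 - c ^ m * x := by
      rw [mul_sub, (hccp ((2:R)^m)).eq, h2c]
    rwa [h4] at h3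
  set ag := (1:R) - c ^ m * g with hag
  set ah := (1:R) - c ^ m * h with hah
  have hcmg : c ^ m * g ∈ er.Epos := er.mulEpos (er.cpowEpos hcE hc m) hgE (hccp g).eq
  have hcmh : c ^ m * h ∈ er.Epos := er.mulEpos (er.cpowEpos hcE hc m) hhE (hccp h).eq
  have hagE : ag ∈ er.Epos := hsub hgE hgh
  have hahE : ah ∈ er.Epos := hsub hhE (by simpa using er.epos0)
  have hag1 : (1:R) - ag ∈ er.Epos := by rw [hag]; simpa using hcmg
  have hah1 : (1:R) - ah ∈ er.Epos := by rw [hah]; simpa using hcmh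
  have hagG : ag ∈ er.G := er.eposG hagE
  have hahG : ah ∈ er.G := er.eposG hahE
  have hCgh : Commute g h := hC
  have hcmgh : Commute (c ^ m * g) (c ^ m * h) :=
    (hccp _).mul_left (((hccp g).symm).mul_right hCgh)
  have hagh : Commute ag ah :=
    (Commute.one_left ah).sub_left ((Commute.one_right (c ^ m * g)).sub_right hcmgh)
  obtain ⟨tg, hsupg, hcomg, htgE, htg1, heqg⟩ := er.tlim hCV hcE hc hagG hagE hag1
  obtain ⟨th, hsuph, hcomh, hthE, hth1, heqh⟩ := er.tlim hCV hcE hc hahG hahE hah1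
  have hagah : ag - ah ∈ er.Epos := by
    have e : ag - ah = c ^ m * (h - g) := by rw [hag, hah, mul_sub]; abel
    rw [e]
    exact er.mulEpos (er.cpowEpos hcE hc m) hgh (hccp _).eq
  have hmono : ∀ n, tseq c ag n - tseq c ah n ∈ er.Epos :=
    er.tseq_mono hcE hc hahE hagE hagh.symm hagah
  have hth_tg : tg - th ∈ er.Epos := by
    refine hsuph.2.2 tg hsupg.1 ?_
    rintro x ⟨n, rfl⟩
    show tg - tseq c ah n ∈ er.Epos
    have e : tg - tseq c ah n
        = (tg - tseq c ag n) + (tseq c ag n - tseq c ah n) := by abel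
    rw [e]
    exact er.eposAdd (hsupg.2.1 _ ⟨n, rfl⟩) (hmono n)
  set bg := (1:R) - tg with hbg
  set bh := (1:R) - th with hbh
  have hbgsq : bg * bg = c ^ m * g := by
    have e : bg * bg = 1 - (tg + tg) + tg * tg := by rw [hbg]; noncomm_ring
    rw [heqg] at e
    have e2 : (1:R) - (ag + tg * tg) + tg * tg = 1 - ag := by abel
    rw [e2] at e
    rw [e, hag]; abel
  have hbhsq : bh * bh = c ^ m * h := by
    have e : bh * bh = 1 - (th + th) + th * th := by rw [hbh]; noncomm_ring
    rw [heqh] at e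
    have e2 : (1:R) - (ah + th * th) + th * th = 1 - ah := by abel
    rw [e2] at e
    rw [e, hah]; abel
  have hcast2 : (((2 ^ k : ℕ)):R) = (2:R) ^ k := by push_cast; ring
  have hsq : ∀ b x : R, b * b = c ^ m * x → ((2:R)^k * b) * ((2:R)^k * b) = x := by
    intro b x hb
    have e1 : ((2:R)^k * b) * ((2:R)^k * b) = ((2:R)^k * (2:R)^k) * (b * b) :=
      ((htp b).symm).mul_mul_mul_comm _ _
    rw [e1, ← pow_add, ← two_mul, ← hm, hb, ← mul_assoc, h2c, one_mul]
  refine ⟨(2:R)^k * bg, (2:R)^k * bh, ?_, hsq bg g hbgsq, ?_, ?_, hsq bh h hbhsq, ?_, ?_⟩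
  · rw [← hcast2]; exact er.natMulEpos _ htg1
  · intro z hzG hzg
    have hz_ag : Commute z ag := (Commute.one_right z).sub_right ((hccp z).symm.mul_right hzg)
    have hz_tg := hcomg z hzG hz_ag
    have hz_bg : Commute z bg := (Commute.one_right z).sub_right hz_tg
    exact ((htp z).symm).mul_right hz_bg
  · rw [← hcast2]; exact er.natMulEpos _ hth1
  · intro z hzG hzh
    have hz_ah : Commute z ah := (Commute.one_right z).sub_right ((hccp z).symm.mul_right hzh)
    have hz_th := hcomh z hzG hz_ah
    have hz_bh : Commute z bh := (Commute.one_right z).sub_right hz_th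
    exact ((htp z).symm).mul_right hz_bh
  · have e : (2:R)^k * bh - (2:R)^k * bg = (2:R)^k * (bh - bg) := (mul_sub _ _ _).symm
    have e2 : bh - bg = tg - th := by rw [hbh, hbg]; abel
    rw [e, e2, ← hcast2]
    exact er.natMulEpos _ hth_tg




lemma sqrt_unique (hQA : er.HasQA) {x y : R} (hx : x ∈ er.Epos) (hy : y ∈ er.Epos)
    (hxy : Commute x y) (hsq : x * x = y * y) : x = y := by
  set d := x - y with hd
  have hdG : d ∈ er.G := er.Gsub (er.eposG hx) (er.eposG hy)
  have hd1 : d * (x + y) = 0 := by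
    rw [hd, sq_diff hxy.eq, hsq, sub_self]
  have h0 : d * d * x + d * d * y = 0 := by
    have : d * d * (x + y) = 0 := by rw [mul_assoc, hd1, mul_zero]
    rwa [mul_add] at this
  have hcdx : Commute (d * d) x := by
    have h1 : Commute d x := (Commute.refl x).sub_left hxy.symm
    exact h1.mul_left h1
  have hcdy : Commute (d * d) y := by
    have h1 : Commute d y := hxy.sub_left (Commute.refl y)
    exact h1.mul_left h1
  have hddE : d * d ∈ er.Epos := er.sqEpos hdG
  have hddx : d * d * x ∈ er.Epos := er.mulEpos hddE hx hcdx.eq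
  have hddy : d * d * y ∈ er.Epos := er.mulEpos hddE hy hcdy.eq
  have hx0 : d * d * x = 0 := by
    refine er.eposZero hddx ?_
    rw [neg_eq_of_add_eq_zero_right h0]
    exact hddy
  have hy0 : d * d * y = 0 := by rw [← neg_eq_of_add_eq_zero_right h0, hx0, neg_zero]
  have hd3 : d * d * d = 0 := by
    have : d * d * d = d * d * x - d * d * y := by rw [← mul_sub, ← hd]
    rw [this, hx0, hy0, sub_zero]
  have hd4 : d * d ^ 2 * d = 0 := by
    rw [pow_two, ← mul_assoc, hd3, zero_mul]
  have hdd : d * d = 0 := (hQA d hdG d hdG hd4).1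
  have hd20 : (1:R) * d ^ 2 * 1 = 0 := by rw [pow_two, hdd]; simp
  have hd0 : d = 0 := by
    have := (hQA 1 er.G1 d hdG hd20).1
    simpa using this
  have := sub_eq_zero.mp (by rw [← hd]; exact hd0)
  exact this

end Sqrt

end ERing

/-- In an AH-algebra, if `gCh` and `0 ≤ g ≤ h`, then
(i) `g² ≤ h²` and (ii) `g^(1/2) ≤ h^(1/2)` (where `r`, `s` denote the square
roots of `g`, `h`). -/
theorem stmt3 {R : Type*} [Ring R] (er : ERing R) (hAH : er.IsAH)
    (g h : R) (hg : g ∈ er.G) (hh : h ∈ er.G) (hC : g * h = h * g)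
    (h0g : er.le 0 g) (hgh : er.le g h)
    (r s : R) (hr : r ∈ er.G) (hr0 : er.le 0 r) (hr2 : r ^ 2 = g)
    (hs : s ∈ er.G) (hs0 : er.le 0 s) (hs2 : s ^ 2 = h) :
    er.le (g ^ 2) (h ^ 2) ∧ er.le r s := by
  obtain ⟨⟨c, hcE, hc⟩, hQA, hCV⟩ := hAH
  have hgE : g ∈ er.Epos := by have h' : g - 0 ∈ er.Epos := h0g; simpa using h'
  have hghE : h - g ∈ er.Epos := hgh
  have hhE : h ∈ er.Epos := by
    have e : h = (h - g) + g := by abel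
    rw [e]; exact er.eposAdd hghE hgE
  constructor
  · show h ^ 2 - g ^ 2 ∈ er.Epos
    have hCm : h * g = g * h := hC.symm
    have e : h ^ 2 - g ^ 2 = (h - g) * (h + g) := by
      rw [pow_two, pow_two, ERing.sq_diff hCm]
    rw [e]
    refine er.mulEpos hghE (er.eposAdd hhE hgE) ?_
    rw [ERing.sq_diff hCm, ERing.sq_diff' hCm]
  · obtain ⟨r', s', hr'E, hr'sq, hr'c, hs'E, hs'sq, hs'c, hrs'⟩ :=
      er.exists_sqrt_pair hQA hCV hcE hc hgE hhE hC hghE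
    have hrE : r ∈ er.Epos := by have h' : r - 0 ∈ er.Epos := hr0; simpa using h'
    have hsE : s ∈ er.Epos := by have h' : s - 0 ∈ er.Epos := hs0; simpa using h'
    have hrg : Commute r g := by
      rw [← hr2, pow_two]
      exact (Commute.refl r).mul_right (Commute.refl r)
    have hsh : Commute s h := by
      rw [← hs2, pow_two]
      exact (Commute.refl s).mul_right (Commute.refl s)
    have hrr' : Commute r r' := hr'c r hr hrg
    have hss' : Commute s s' := hs'c s hs hsh
    have hreq : r = r' := er.sqrt_unique hQA hrE hr'E hrr'
      (by rw [hr'sq, ← hr2, pow_two])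
    have hseq : s = s' := er.sqrt_unique hQA hsE hs'E hss'
      (by rw [hs'sq, ← hs2, pow_two])
    show s - r ∈ er.Epos
    rw [hreq, hseq]
    exact hrs'
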